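/- Let A = KQ/I be a special multiserial algebra and a an arrow. Then a occurs either in the (σ,τ)-maximal path M_a = τ^{n_a−1}(a)⋯τ(a) a σ(a)⋯σ^{m_a−1}(a) (when m_a and n_a exist) or in the simple cycle C_a = a σ(a)⋯σ^{m̂_a−1}(a) (when m̂_a exists), but not both. -/

import Mathlib

/-!  A model of the path algebra `KQ` of a finite quiver `Q` (vertex set `V`,
arrow set `A`, source and target maps `s t : A → V`), as the quotient of the
free algebra on `V ⊕ A` by the usual path-algebra relations.  -/

open FreeAlgebra

inductive PathRel (K V A : Type) [Field K] [Fintype V] [DecidableEq V] (s t : A → V) :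
    FreeAlgebra K (V ⊕ A) → FreeAlgebra K (V ⊕ A) → Prop
  | vtxMul : ∀ v w : V,
      PathRel K V A s t (ι K (Sum.inl v) * ι K (Sum.inl w))
        (if v = w then ι K (Sum.inl v) else 0)
  | unit : PathRel K V A s t (∑ v : V, ι K (Sum.inl v)) 1
  | src : ∀ a : A,
      PathRel K V A s t (ι K (Sum.inl (s a)) * ι K (Sum.inr a)) (ι K (Sum.inr a))
  | tgt : ∀ a : A,
      PathRel K V A s t (ι K (Sum.inr a) * ι K (Sum.inl (t a))) (ι K (Sum.inr a))

/-- The path algebra `KQ`. -/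
abbrev PathAlg (K V A : Type) [Field K] [Fintype V] [DecidableEq V] (s t : A → V) : Type :=
  RingQuot (PathRel K V A s t)

section

variable (K V A : Type) [Field K] [Fintype V] [DecidableEq V] (s t : A → V)

/-- The element of `KQ` corresponding to an arrow. -/
noncomputable def arrow (a : A) : PathAlg K V A s t :=
  RingQuot.mkAlgHom K (PathRel K V A s t) (ι K (Sum.inr a))

/-- The idempotent of `KQ` corresponding to a vertex (trivial path). -/
noncomputable def vtx (v : V) : PathAlg K V A s t :=
  RingQuot.mkAlgHom K (PathRel K V A s t) (ι K (Sum.inl v))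

/-- The element of `KQ` given by a path, recorded as its list of arrows. -/
noncomputable def pathElem (l : List A) : PathAlg K V A s t :=
  (l.map (arrow K V A s t)).prod

/-- The ideal `J²`, where `J` is the arrow ideal: it is generated by the
products of two arrows (equivalently, by the paths of length 2). -/
def JSqIdeal : TwoSidedIdeal (PathAlg K V A s t) :=
  TwoSidedIdeal.span {x | ∃ a b : A, x = arrow K V A s t a * arrow K V A s t b}

/-- An ideal `I` of `KQ` is admissible if `J^N ⊆ I ⊆ J²` for some `N ≥ 2`;
`J^N ⊆ I` amounts to all paths of length `N` lying in `I`. -/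
def Admissible (I : TwoSidedIdeal (PathAlg K V A s t)) : Prop :=
  ∃ N : ℕ, 2 ≤ N ∧ (∀ l : List A, l.length = N → pathElem K V A s t l ∈ I) ∧
    I ≤ JSqIdeal K V A s t

/-- Condition (M): for every arrow `a` there is at most one arrow `b` with
`ab ∉ I` and at most one arrow `c` with `ca ∉ I`. -/
def ConditionM (I : TwoSidedIdeal (PathAlg K V A s t)) : Prop :=
  ∀ a : A,
    (∀ b b' : A, arrow K V A s t a * arrow K V A s t b ∉ I →
      arrow K V A s t a * arrow K V A s t b' ∉ I → b = b') ∧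
    (∀ c c' : A, arrow K V A s t c * arrow K V A s t a ∉ I →
      arrow K V A s t c' * arrow K V A s t a ∉ I → c = c')

/-- `σ : Q₁ → Q₁ ∪ {⋄}` (with `⋄ = none`): `σ a = some b` iff `ab ∉ I`. -/
def SigmaSpec (I : TwoSidedIdeal (PathAlg K V A s t)) (σ : A → Option A) : Prop :=
  ∀ a b : A, σ a = some b ↔ arrow K V A s t a * arrow K V A s t b ∉ I

/-- `τ : Q₁ → Q₁ ∪ {⋄}` (with `⋄ = none`): `τ a = some c` iff `ca ∉ I`. -/
def TauSpec (I : TwoSidedIdeal (PathAlg K V A s t)) (τ : A → Option A) : Prop :=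
  ∀ a c : A, τ a = some c ↔ arrow K V A s t c * arrow K V A s t a ∉ I

end

/-- Iterate of `σ` (extended to `Q₁ ∪ {⋄}` by `σ(⋄) = ⋄`) applied to an arrow:
`OIter σ n a = σⁿ(a)`. -/
def OIter {A : Type} (σ : A → Option A) (n : ℕ) (a : A) : Option A :=
  (fun o => o.bind σ)^[n] (some a)

/-- A `(σ,τ)`-maximal path `a₁ ⋯ a_r`: `σ(aᵢ) = a_{i+1}`, `σ(a_r) = ⋄`,
`τ(a₁) = ⋄`. -/
def IsMaximalPath {A : Type} (σ τ : A → Option A) (l : List A) : Prop :=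
  l ≠ [] ∧ l.Chain' (fun x y => σ x = some y) ∧
    (∀ x ∈ l.getLast?, σ x = none) ∧ (∀ x ∈ l.head?, τ x = none)

/-- The cycle `C_a = a σ(a) ⋯ σ^{m̂_a−1}(a)`, where `m̂_a` is the least positive
integer with `σ^{m̂_a}(a) = a`:  `l` has entries the iterates of `σ` at `a` and
length the least positive return time of `a` under `σ`. -/
def IsSigmaCycleOf {A : Type} (σ : A → Option A) (a : A) (l : List A) : Prop :=
  l ≠ [] ∧ (∀ i : ℕ, i < l.length → l[i]? = OIter σ i a) ∧
    OIter σ l.length a = some a ∧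
    ∀ k : ℕ, 0 < k → k < l.length → OIter σ k a ≠ some a

/-- A list of arrows is composable (i.e. a genuine path) if the target of each
arrow is the source of the next. -/
def Composable {V A : Type} (s t : A → V) (l : List A) : Prop :=
  l.Chain' (fun a b => t a = s b)

/-- A simple cycle: a nonempty path with the same start and end vertex and no
repeated arrows. -/
def IsSimpleCycle {V A : Type} (s t : A → V) (l : List A) : Prop :=
  l ≠ [] ∧ Composable s t l ∧ (∀ x ∈ l.head?, ∀ y ∈ l.getLast?, t y = s x) ∧ l.Nodup

/-- The path `C^m` for a cycle `C`. -/
def cyclePow {A : Type} (l : List A) (m : ℕ) : List A := (List.replicate m l).flatten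

/-- A defining pair `(𝒮, μ)` in the quiver `Q`: a set `𝒮` of simple cycles and
`μ : 𝒮 → ℤ_{>0}` satisfying (D0)–(D4). -/
def IsDefiningPair {V A : Type} (s t : A → V) (S : Set (List A)) (μ : List A → ℕ) : Prop :=
  (∀ l ∈ S, IsSimpleCycle s t l) ∧
  (∀ l ∈ S, 0 < μ l) ∧
  (∀ l ∈ S, l.length = 1 → 1 < μ l) ∧
  (∀ l ∈ S, ∀ l' : List A, l.IsRotated l' → l' ∈ S) ∧
  (∀ l ∈ S, ∀ l' ∈ S, l.IsRotated l' → μ l = μ l') ∧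
  (∀ a : A, ∃ l ∈ S, a ∈ l) ∧
  (∀ l ∈ S, ∀ l' ∈ S, (∃ a : A, a ∈ l ∧ a ∈ l') → l.IsRotated l')

/-- The set of relations of Types 1, 2 and 3 attached to a defining pair:
Type 1: `C^{μ(C)} − C'^{μ(C')}` for `C, C' ∈ 𝒮` cycles at the same vertex;
Type 2: `C^{μ(C)} a` for `C ∈ 𝒮` with first arrow `a`;
Type 3: `ab` for arrows `a, b` with `ab` not a subpath of any `C^s`, `C ∈ 𝒮`. -/
def RelSet (K V A : Type) [Field K] [Fintype V] [DecidableEq V] (s t : A → V)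
    (S : Set (List A)) (μ : List A → ℕ) : Set (PathAlg K V A s t) :=
  {x | ∃ l ∈ S, ∃ l' ∈ S, ∃ a ∈ l.head?, ∃ a' ∈ l'.head?, s a = s a' ∧
      x = pathElem K V A s t (cyclePow l (μ l)) - pathElem K V A s t (cyclePow l' (μ l'))} ∪
  {x | ∃ l ∈ S, ∃ a ∈ l.head?, x = pathElem K V A s t (cyclePow l (μ l) ++ [a])} ∪
  {x | ∃ a b : A, x = arrow K V A s t a * arrow K V A s t b ∧
      ∀ l ∈ S, ∀ m : ℕ, ¬ [a, b] <:+: cyclePow l m}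

/-- The ideal of relations of a defining pair. -/
def DefIdeal (K V A : Type) [Field K] [Fintype V] [DecidableEq V] (s t : A → V)
    (S : Set (List A)) (μ : List A → ℕ) : TwoSidedIdeal (PathAlg K V A s t) :=
  TwoSidedIdeal.span (RelSet K V A s t S μ)

/-- The relation whose `RingQuot` is the algebra `KQ/I` defined by a defining
pair, `I` generated by the Type 1, 2, 3 relations. -/
def QRel (K V A : Type) [Field K] [Fintype V] [DecidableEq V] (s t : A → V)
    (S : Set (List A)) (μ : List A → ℕ) :
    PathAlg K V A s t → PathAlg K V A s t → Prop :=
  fun x y => x ∈ RelSet K V A s t S μ ∧ y = 0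

namespace OIterAux

variable {A : Type} {σ τ : A → Option A}

theorem oiter_zero (a : A) : OIter σ 0 a = some a := rfl

theorem oiter_succ (n : ℕ) (a : A) : OIter σ (n+1) a = (OIter σ n a).bind σ :=
  Function.iterate_succ_apply' _ n _

theorem oiter_succ' {a b : A} (n : ℕ) (h : σ a = some b) :
    OIter σ (n+1) a = OIter σ n b := by
  unfold OIter
  rw [Function.iterate_succ_apply]
  simp [h]

theorem bind_iter_none (n : ℕ) : (fun o => o.bind σ)^[n] (none : Option A) = none := by
  induction n with
  | zero => rfl
  | succ n ih => rw [Function.iterate_succ_apply]; simpa using ih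

theorem oiter_add (m n : ℕ) (a b : A) (h : OIter σ m a = some b) :
    OIter σ (m + n) a = OIter σ n b := by
  unfold OIter at *
  rw [Nat.add_comm, Function.iterate_add_apply, h]

theorem oiter_none_mono {m n : ℕ} (a : A) (h : OIter σ m a = none) (hmn : m ≤ n) :
    OIter σ n a = none := by
  obtain ⟨k, rfl⟩ := Nat.exists_eq_add_of_le hmn
  unfold OIter at *
  rw [Nat.add_comm, Function.iterate_add_apply, h, bind_iter_none]

theorem oiter_cycle_pow {p : ℕ} (a : A) (h : OIter σ p a = some a) (k : ℕ) :
    OIter σ (k * p) a = some a := by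
  induction k with
  | zero => rw [Nat.zero_mul, oiter_zero]
  | succ k ih => rw [Nat.succ_mul, oiter_add _ _ _ _ ih, h]

theorem oiter_rev (hinv : ∀ x y : A, σ x = some y → τ y = some x) :
    ∀ (k : ℕ) (x y : A), OIter σ k x = some y → OIter τ k y = some x := by
  intro k
  induction k with
  | zero =>
    intro x y h
    rw [oiter_zero] at h
    injection h with h
    rw [h]
    exact oiter_zero y
  | succ k ih =>
    intro x y h
    rw [oiter_succ] at h
    obtain ⟨z, hz, hzy⟩ := Option.bind_eq_some_iff.mp h
    exact (oiter_succ' k (hinv z y hzy)).trans (ih x z hz)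

theorem chain_oiter {l : List A} (hc : l.Chain' fun x y => σ x = some y) :
    ∀ (k i : ℕ) (b c : A), l[i]? = some b → l[i+k]? = some c → OIter σ k b = some c := by
  intro k
  induction k with
  | zero =>
    intro i b c hb hcc
    rw [Nat.add_zero, hb] at hcc
    injection hcc with h
    rw [oiter_zero, h]
  | succ k ih =>
    intro i b c hb hcc
    obtain ⟨hlt, hcc'⟩ := List.getElem?_eq_some_iff.mp hcc
    have hmidlt : i + k < l.length := by omega
    have hd : l[i+k]? = some (l[i+k]'hmidlt) := List.getElem?_eq_getElem hmidlt
    have h1 := ih i b _ hb hd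
    have h2 : σ (l[i+k]'hmidlt) = some c := by
      have hstep := List.isChain_iff_getElem.mp hc (i+k) (by omega)
      rw [hstep]
      exact congrArg some hcc'
    rw [oiter_succ, h1]
    simpa using h2

theorem exists_repeat [Fintype A] (σ : A → Option A) (a : A)
    (h : ∀ n, OIter σ n a ≠ none) :
    ∃ i j : ℕ, i < j ∧ OIter σ i a = OIter σ j a := by
  classical
  have hninj : ¬ Function.Injective
      (fun n : Fin (Fintype.card (Option A) + 1) => OIter σ n.1 a) := by
    intro hinj
    have := Fintype.card_le_of_injective _ hinj
    simp at this
  rw [Function.not_injective_iff] at hninj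
  obtain ⟨i, j, hij, hne⟩ := hninj
  rcases lt_or_gt_of_ne (show (i:ℕ) ≠ (j:ℕ) from fun h => hne (Fin.val_injective h)) with hlt | hlt
  · exact ⟨i, j, hlt, hij⟩
  · exact ⟨j, i, hlt, hij.symm⟩

end OIterAux

open OIterAux in
theorem main_aux {A : Type} [Fintype A] (σ τ : A → Option A)
    (hst : ∀ x y : A, σ x = some y → τ y = some x)
    (hts : ∀ x y : A, τ x = some y → σ y = some x) (a : A) :
    Xor' (∃ l : List A, IsMaximalPath σ τ l ∧ a ∈ l)
         (∃ l : List A, IsSigmaCycleOf σ a l) := by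
  classical
  by_cases hterm : ∃ m, OIter σ m a = none
  · -- case A : σ-orbit of a dies; a maximal path exists, no cycle
    left
    constructor
    · -- build the maximal path
      -- the τ-orbit also dies
      have htermτ : ∃ n, OIter τ n a = none := by
        by_contra hc
        push_neg at hc
        obtain ⟨i, j, hij, he⟩ := exists_repeat τ a hc
        obtain ⟨z, hz⟩ := Option.ne_none_iff_exists'.mp (hc i)
        have hj : OIter τ j a = some z := by rw [← he, hz]
        set p := j - i with hp
        have hpos : 0 < p := by omega
        have hzz : OIter τ p z = some z := by
          have h2 := oiter_add i p a z hz
          rw [show i + p = j by omega] at h2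
          exact h2.symm.trans hj
        have hσz : OIter σ p z = some z := oiter_rev hts p z z hzz
        have hia : OIter σ i z = some a := oiter_rev hts i a z hz
        obtain ⟨m, hm⟩ := hterm
        have h3 : OIter σ (p + i) z = some a := (oiter_add p i z z hσz).trans hia
        have h4 : OIter σ (p + i + m) z = none := by
          rw [oiter_add (p+i) m z a h3]; exact hm
        have h5 : OIter σ ((p + i + m) * p) z = some z := oiter_cycle_pow z hσz (p+i+m)
        have h6 : OIter σ ((p + i + m) * p) z = none :=
          oiter_none_mono z h4 (Nat.le_mul_of_pos_right _ hpos)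
        rw [h5] at h6; exact nomatch h6
      set m := Nat.find hterm with hmdef
      have hm : OIter σ m a = none := Nat.find_spec hterm
      have hmlt : ∀ k < m, OIter σ k a ≠ none := fun k hk => Nat.find_min hterm hk
      have hm1 : 0 < m := by
        rcases Nat.eq_zero_or_pos m with h | h
        · rw [h, oiter_zero] at hm; exact nomatch hm
        · exact h
      set n := Nat.find htermτ with hndef
      have hn : OIter τ n a = none := Nat.find_spec htermτ
      have hnlt : ∀ k < n, OIter τ k a ≠ none := fun k hk => Nat.find_min htermτ hk
      have hn1 : 0 < n := by
        rcases Nat.eq_zero_or_pos n with h | h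
        · rw [h, oiter_zero] at hn; exact nomatch hn
        · exact h
      obtain ⟨b, hb⟩ := Option.ne_none_iff_exists'.mp (hnlt (n-1) (by omega))
      have hba : OIter σ (n-1) b = some a := oiter_rev hts (n-1) a b hb
      have hτb : τ b = none := by
        have h2 := hn
        rw [show n = (n-1)+1 by omega, oiter_succ, hb] at h2
        simpa using h2
      set len := n - 1 + m with hlendef
      have hsome : ∀ i < len, OIter σ i b ≠ none := by
        intro i hi
        by_cases hle : i ≤ n - 1
        · obtain ⟨c, hc⟩ := Option.ne_none_iff_exists'.mp (hnlt (n-1-i) (by omega))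
          have h2 := oiter_add (n-1-i) i a c hc
          rw [show n-1-i+i = n-1 by omega] at h2
          have hic : OIter τ i c = some b := h2.symm.trans hb
          have h3 : OIter σ i b = some c := oiter_rev hts i c b hic
          simp [h3]
        · have h2 := oiter_add (n-1) (i-(n-1)) b a hba
          rw [show n-1 + (i-(n-1)) = i by omega] at h2
          rw [h2]
          exact hmlt _ (by omega)
      have hend : OIter σ len b = none := by
        rw [hlendef, oiter_add (n-1) m b a hba]; exact hm
      set L : List A := List.ofFn (fun i : Fin len => (OIter σ i.1 b).getD a) with hLdef
      have hLlen : L.length = len := by simp [hLdef]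
      have hLget : ∀ i : ℕ, i < len → OIter σ i b = L[i]? := by
        intro i h
        obtain ⟨c, hc⟩ := Option.ne_none_iff_exists'.mp (hsome i h)
        have hgl : L[i]? = some ((OIter σ i b).getD a) := by
          rw [List.getElem?_eq_getElem (by omega : i < L.length)]
          simp [hLdef]
        rw [hgl, hc]
        simp
      refine ⟨L, ⟨?_, ?_, ?_, ?_⟩, ?_⟩
      · intro h; rw [h] at hLlen; simp at hLlen; omega
      · refine List.isChain_iff_getElem.mpr ?_
        intro i hilt
        rw [hLlen] at hilt
        have h1 := hLget i (by omega)
        have h2 := hLget (i+1) (by omega)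
        have e1 : L[i]? = some (L[i]'(by omega)) := List.getElem?_eq_getElem (by omega)
        have e2 : L[i+1]? = some (L[i+1]'(by omega)) := List.getElem?_eq_getElem (by omega)
        have h3 : OIter σ (i+1) b = (OIter σ i b).bind σ := oiter_succ i b
        rw [h2, e2, h1, e1] at h3
        simpa using h3.symm
      · intro x hx
        rw [List.getLast?_eq_getElem?, hLlen] at hx
        have h1 := hLget (len-1) (by omega)
        rw [← h1] at hx
        have h2 : OIter σ ((len-1)+1) b = (OIter σ (len-1) b).bind σ := oiter_succ _ b
        rw [show (len-1)+1 = len by omega, hend, hx] at h2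
        simpa using h2.symm
      · intro x hx
        rw [List.head?_eq_getElem? (l := L)] at hx
        have h1 := hLget 0 (by omega)
        rw [← h1, oiter_zero] at hx
        injection hx with hx
        rw [← hx]
        exact hτb
      · have h1 := hLget (n-1) (by omega)
        rw [hba] at h1
        obtain ⟨hlt, heq⟩ := List.getElem?_eq_some_iff.mp h1.symm
        exact heq ▸ List.getElem_mem hlt
    · -- no cycle
      rintro ⟨l, hne, -, hcyc, -⟩
      obtain ⟨m, hm⟩ := hterm
      have hp : 0 < l.length := List.length_pos_iff.mpr hne
      have h1 := oiter_cycle_pow a hcyc m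
      have h2 : OIter σ (m * l.length) a = none :=
        oiter_none_mono a hm (Nat.le_mul_of_pos_right m hp)
      rw [h1] at h2; exact nomatch h2
  · -- case B : σ-orbit never dies; cycle exists, no maximal path
    push_neg at hterm
    right
    constructor
    · -- build the cycle
      have hrep : ∃ p, 0 < p ∧ OIter σ p a = some a := by
        obtain ⟨i, j, hij, he⟩ := exists_repeat σ a hterm
        obtain ⟨z, hz⟩ := Option.ne_none_iff_exists'.mp (hterm i)
        have hj : OIter σ j a = some z := by rw [← he, hz]
        set p := j - i with hp
        obtain ⟨w, hw⟩ := Option.ne_none_iff_exists'.mp (hterm p)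
        have h2 : OIter σ (p + i) a = some z := by
          rw [show p + i = j by omega]; exact hj
        rw [oiter_add p i a w hw] at h2
        have h3 : OIter τ i z = some w := oiter_rev hst i w z h2
        have h4 : OIter τ i z = some a := oiter_rev hst i a z hz
        rw [h4] at h3
        injection h3 with h3
        exact ⟨p, by omega, by rw [hw, h3]⟩
      set p := Nat.find hrep with hpdef
      obtain ⟨hppos, hpcyc⟩ := Nat.find_spec hrep
      set L : List A := List.ofFn (fun i : Fin p => (OIter σ i.1 a).getD a) with hLdef
      have hLlen : L.length = p := by simp [hLdef]
      refine ⟨L, ?_, ?_, ?_, ?_⟩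
      · intro h; rw [h] at hLlen; simp at hLlen; omega
      · intro i hi
        rw [hLlen] at hi
        obtain ⟨c, hc⟩ := Option.ne_none_iff_exists'.mp (hterm i)
        rw [List.getElem?_eq_getElem (by omega : i < L.length), hc]
        simp [hLdef, hc]
      · rw [hLlen]; exact hpcyc
      · intro k hk hkl h
        rw [hLlen] at hkl
        exact Nat.find_min hrep (m := k) hkl ⟨hk, h⟩
    · -- no maximal path
      rintro ⟨l, ⟨hne, hchain, hlast, -⟩, ha⟩
      obtain ⟨i, hi, hia⟩ := List.mem_iff_getElem.mp ha
      have hlen : 0 < l.length := List.length_pos_iff.mpr hne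
      have hb : l[i]? = some a := by rw [List.getElem?_eq_getElem hi, hia]
      have hc : l[i + (l.length-1-i)]? = some (l[l.length-1]'(by omega)) := by
        rw [show i + (l.length-1-i) = l.length-1 by omega]
        exact List.getElem?_eq_getElem (by omega)
      have h1 := chain_oiter hchain (l.length-1-i) i a _ hb hc
      have h2 : σ (l[l.length-1]'(by omega)) = none := by
        apply hlast
        rw [List.getLast?_eq_getElem?]
        exact List.getElem?_eq_getElem (by omega)
      have h3 : OIter σ ((l.length-1-i)+1) a = none := by
        rw [oiter_succ, h1]
        simpa using h2
      exact hterm _ h3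


/-- Every arrow `a` occurs either in the `(σ,τ)`-maximal path
`M_a` or in the simple cycle `C_a`, but not both. -/
theorem mem_maximal_path_xor_cycle
    (K V A : Type) [Field K] [Fintype V] [DecidableEq V] [Fintype A]
    (s t : A → V) (I : TwoSidedIdeal (PathAlg K V A s t))
    (hAdm : Admissible K V A s t I) (hM : ConditionM K V A s t I)
    (σ τ : A → Option A) (hσ : SigmaSpec K V A s t I σ) (hτ : TauSpec K V A s t I τ)
    (a : A) :
    Xor' (∃ l : List A, IsMaximalPath σ τ l ∧ a ∈ l)
         (∃ l : List A, IsSigmaCycleOf σ a l) := by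
  have hst : ∀ x y : A, σ x = some y → τ y = some x :=
    fun x y h => (hτ y x).mpr ((hσ x y).mp h)
  have hts : ∀ x y : A, τ x = some y → σ y = some x :=
    fun x y h => (hσ y x).mpr ((hτ x y).mp h)
  exact main_aux σ τ hst hts a
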